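/- arXiv:2208.06288 — 2 statements merged into one kernel-verified Lean document; each statement's English description precedes it below -/
import Mathlib

section
/- A nonempty compact Hausdorff space X is a continuous open image of a π-space if and only if X has a countable π-base and the cardinality of X is at most the continuum 2^{ℵ₀}. -/
open Set Topology

namespace PiSpacePaper

/-- The restriction `p↾n` of `p : ℕ → ℕ`, as a list of length `n`. -/
def restrictSeq (p : ℕ → ℕ) (n : ℕ) : List ℕ := (List.range n).map p

/-- The basic clopen set `S_a` of the Baire space. -/
def cyl (a : List ℕ) : Set (ℕ → ℕ) := {p | restrictSeq p a.length = a}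

/-- The fruit `⋂ n, V (p↾n)` of a branch `p` in a Souslin scheme `V`. -/
def fruit {X : Type*} (V : List ℕ → Set X) (p : ℕ → ℕ) : Set X :=
  ⋂ n : ℕ, V (restrictSeq p n)

/-- A Souslin scheme `V` covers the set `s`. -/
def Covers {X : Type*} (V : List ℕ → Set X) (s : Set X) : Prop :=
  V [] = s ∧ ∀ a : List ℕ, V a = ⋃ n : ℕ, V (a ++ [n])

/-- A Souslin scheme `V` partitions the set `s`. -/
def Partitions {X : Type*} (V : List ℕ → Set X) (s : Set X) : Prop :=
  Covers V s ∧ ∀ (a : List ℕ) (n m : ℕ), n ≠ m → V (a ++ [n]) ∩ V (a ++ [m]) = ∅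

/-- A Souslin scheme is complete iff all fruits are nonempty. -/
def Complete {X : Type*} (V : List ℕ → Set X) : Prop :=
  ∀ p : ℕ → ℕ, (fruit V p).Nonempty

/-- A Souslin scheme has strict branches iff every fruit is a singleton. -/
def StrictBranches {X : Type*} (V : List ℕ → Set X) : Prop :=
  ∀ p : ℕ → ℕ, ∃ x : X, fruit V p = {x}

/-- A Souslin scheme is open iff all its members are open sets. -/
def OpenScheme {X : Type*} [TopologicalSpace X] (V : List ℕ → Set X) : Prop :=
  ∀ a : List ℕ, IsOpen (V a)

/-- `flesh V = ⋃ a, V a`. -/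
def flesh {X : Type*} (V : List ℕ → Set X) : Set X := ⋃ a : List ℕ, V a

/-- `branches V x = {q ∈ ℕ^ℕ : x ∈ fruit V q}`. -/
def branches {X : Type*} (V : List ℕ → Set X) (x : X) : Set (ℕ → ℕ) :=
  {q | x ∈ fruit V q}

/-- A family `γ` of subsets is a π-net for a space: all members are nonempty and every
nonempty open set contains a member. -/
def IsPiNet {X : Type*} [TopologicalSpace X] (γ : Set (Set X)) : Prop :=
  (∀ G ∈ γ, G.Nonempty) ∧
  ∀ U : Set X, IsOpen U → U.Nonempty → ∃ G ∈ γ, G ⊆ U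

/-- A family `γ` of subsets is a π-base for a space: all members are nonempty open sets
and every nonempty open set contains a member. -/
def IsPiBase {X : Type*} [TopologicalSpace X] (γ : Set (Set X)) : Prop :=
  (∀ G ∈ γ, IsOpen G ∧ G.Nonempty) ∧
  ∀ U : Set X, IsOpen U → U.Nonempty → ∃ G ∈ γ, G ⊆ U

/-- A π-space: there is an open Souslin scheme that partitions the space, has strict
branches, and whose family of members is a π-base. -/
def IsPiSpace (X : Type*) [TopologicalSpace X] : Prop :=
  ∃ V : List ℕ → Set X, OpenScheme V ∧ Partitions V Set.univ ∧ StrictBranches V ∧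
    IsPiBase {S : Set X | ∃ a : List ℕ, S = V a}

/-- A Lusin π-base for a space. -/
def IsLusinPiBase {X : Type*} [TopologicalSpace X] (V : List ℕ → Set X) : Prop :=
  OpenScheme V ∧ Partitions V Set.univ ∧ StrictBranches V ∧
  ∀ (x : X) (U : Set X), IsOpen U → x ∈ U →
    ∃ (a : List ℕ) (n : ℕ), x ∈ V a ∧ (⋃ i : ℕ, ⋃ _ : n ≤ i, V (a ++ [i])) ⊆ U

/-- A map is quasi-open iff the image of every nonempty open set has nonempty interior. -/
def IsQuasiOpen {X Y : Type*} [TopologicalSpace X] [TopologicalSpace Y] (f : X → Y) : Prop :=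
  ∀ U : Set X, IsOpen U → U.Nonempty → (interior (f '' U)).Nonempty

/-- A π-net Souslin scheme on a space `X`: for every finite sequence `a`, the family
`{V b : b ⊒ a}` is a π-net for the subspace `V a` of `X` (whose nonempty open sets are
exactly the nonempty sets `U ∩ V a` with `U` open in `X`). -/
def IsPiNetScheme {X : Type*} [TopologicalSpace X] (V : List ℕ → Set X) : Prop :=
  ∀ a : List ℕ,
    (∀ b : List ℕ, a <+: b → (V b).Nonempty) ∧
    ∀ U : Set X, IsOpen U → (U ∩ V a).Nonempty → ∃ b : List ℕ, a <+: b ∧ V b ⊆ U ∩ V a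

/-- A π-base Souslin scheme on a space is an open π-net Souslin scheme. -/
def IsPiBaseScheme {X : Type*} [TopologicalSpace X] (V : List ℕ → Set X) : Prop :=
  OpenScheme V ∧ IsPiNetScheme V

/-- A selector on a Souslin scheme `V`: a surjection of the Baire space onto `flesh V`
such that every fiber `f⁻¹(x)` is a dense subset of the subspace `branches V x` of the
Baire space. -/
def IsSelector {X : Type*} (V : List ℕ → Set X) (f : (ℕ → ℕ) → X) : Prop :=
  Set.range f = flesh V ∧
  ∀ x ∈ flesh V, f ⁻¹' {x} ⊆ branches V x ∧ branches V x ⊆ closure (f ⁻¹' {x})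

/-- The topology `σ_{τ,f}` on the Baire space, generated by the subbase consisting of the
`τ`-preimages under `f` together with the basic sets `S_a`. -/
def sigmaTop {X : Type*} [TopologicalSpace X] (f : (ℕ → ℕ) → X) :
    TopologicalSpace (ℕ → ℕ) :=
  TopologicalSpace.generateFrom
    ({S : Set (ℕ → ℕ) | ∃ U : Set X, IsOpen U ∧ S = f ⁻¹' U} ∪
      {S : Set (ℕ → ℕ) | ∃ a : List ℕ, S = cyl a})

/-- The Souslin scheme `V^g`, where `V^g_a = V_{g ∘ a}`. -/
def schemeComp {X : Type*} (V : List ℕ → Set X) (g : ℕ → ℕ) : List ℕ → Set X :=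
  fun a => V (a.map g)

/-- A subset of the Baire space is dense-in-itself iff it has no isolated points. -/
def DenseInItself (B : Set (ℕ → ℕ)) : Prop :=
  ∀ q ∈ B, q ∈ closure (B \ {q})

/-- `X` is a continuous open image of a π-space. -/
def IsContinuousOpenImageOfPiSpace (X : Type) [TopologicalSpace X] : Prop :=
  ∃ (Y : Type) (_ : TopologicalSpace Y) (f : Y → X),
    IsPiSpace Y ∧ Continuous f ∧ IsOpenMap f ∧ Function.Surjective f

/-- The topology `τ_N` on the Baire space generated by the sets `U \ A` with `U` open in
the Baire space and `A` nowhere dense in the Baire space. -/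
def tauN : TopologicalSpace (ℕ → ℕ) :=
  TopologicalSpace.generateFrom
    {S : Set (ℕ → ℕ) | ∃ U A : Set (ℕ → ℕ), IsOpen U ∧ IsNowhereDense A ∧ S = U \ A}

section Basics

lemma restrictSeq_length (p : ℕ → ℕ) (n : ℕ) : (restrictSeq p n).length = n := by
  simp [restrictSeq]

lemma restrictSeq_zero (p : ℕ → ℕ) : restrictSeq p 0 = [] := rfl

lemma restrictSeq_succ (p : ℕ → ℕ) (n : ℕ) :
    restrictSeq p (n + 1) = restrictSeq p n ++ [p n] := by
  simp [restrictSeq, List.range_succ]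

lemma restrictSeq_getElem (p : ℕ → ℕ) {n i : ℕ} (h : i < n) :
    (restrictSeq p n)[i]'(by simpa [restrictSeq_length] using h) = p i := by
  simp [restrictSeq]

lemma mem_cyl_iff {p : ℕ → ℕ} {a : List ℕ} :
    p ∈ cyl a ↔ ∀ i (h : i < a.length), p i = a[i] := by
  constructor
  · intro hp i h
    have : (restrictSeq p a.length)[i]'(by simpa [restrictSeq_length]) = a[i] := by
      simp only [cyl, Set.mem_setOf_eq] at hp; simp [hp]
    rw [restrictSeq_getElem p h] at this; exact this
  · intro h
    show restrictSeq p a.length = a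
    apply List.ext_getElem (by simp [restrictSeq_length])
    intro i h1 h2
    rw [restrictSeq_getElem p (by simpa [restrictSeq_length] using h1)]
    exact h i h2

lemma restrictSeq_mem_cyl (p : ℕ → ℕ) (n : ℕ) : p ∈ cyl (restrictSeq p n) := by
  rw [mem_cyl_iff]
  intro i h
  rw [restrictSeq_getElem p (by simpa [restrictSeq_length] using h)]

lemma cyl_nonempty (a : List ℕ) : (cyl a).Nonempty := by
  refine ⟨fun i => a.getD i 0, mem_cyl_iff.2 fun i h => ?_⟩
  simp [List.getD_eq_getElem?_getD, List.getElem?_eq_getElem h]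

lemma cyl_anti {p : ℕ → ℕ} {m n : ℕ} (h : m ≤ n) :
    cyl (restrictSeq p n) ⊆ cyl (restrictSeq p m) := by
  intro q hq
  rw [mem_cyl_iff] at hq ⊢
  intro i hi
  rw [restrictSeq_length] at hi
  have := hq i (by rw [restrictSeq_length]; omega)
  rw [restrictSeq_getElem p (by omega)] at this
  rw [restrictSeq_getElem p hi]
  exact this

lemma cyl_nil : cyl ([] : List ℕ) = Set.univ := by
  ext p; simp [mem_cyl_iff]

lemma cyl_concat_subset (a : List ℕ) (n : ℕ) : cyl (a ++ [n]) ⊆ cyl a := by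
  intro p hp
  rw [mem_cyl_iff] at hp ⊢
  intro i hi
  have := hp i (by simp; omega)
  rwa [List.getElem_append_left] at this

lemma mem_cyl_concat {p : ℕ → ℕ} {a : List ℕ} (hp : p ∈ cyl a) :
    p ∈ cyl (a ++ [p a.length]) := by
  rw [mem_cyl_iff] at hp ⊢
  intro i hi
  simp only [List.length_append, List.length_singleton] at hi
  rcases Nat.lt_or_ge i a.length with h | h
  · rw [List.getElem_append_left h]; exact hp i h
  · have : i = a.length := by omega
    subst this
    simp

lemma cyl_eq_iUnion (a : List ℕ) : cyl a = ⋃ n : ℕ, cyl (a ++ [n]) := by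
  apply Set.Subset.antisymm
  · intro p hp
    exact Set.mem_iUnion.2 ⟨p a.length, mem_cyl_concat hp⟩
  · exact Set.iUnion_subset fun n => cyl_concat_subset a n

lemma cyl_disjoint {a : List ℕ} {n m : ℕ} (h : n ≠ m) :
    cyl (a ++ [n]) ∩ cyl (a ++ [m]) = ∅ := by
  ext p
  simp only [Set.mem_inter_iff, Set.mem_empty_iff_false, iff_false, not_and]
  intro h1 h2
  rw [mem_cyl_iff] at h1 h2
  have e1 := h1 a.length (by simp)
  have e2 := h2 a.length (by simp)
  simp at e1 e2
  exact h (e1 ▸ e2 ▸ rfl)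

lemma fruit_cyl (p : ℕ → ℕ) : fruit cyl p = {p} := by
  ext q
  simp only [fruit, Set.mem_iInter, Set.mem_singleton_iff]
  constructor
  · intro h
    funext i
    have := h (i + 1)
    rw [mem_cyl_iff] at this
    have := this i (by rw [restrictSeq_length]; omega)
    rwa [restrictSeq_getElem p (by omega)] at this
  · rintro rfl
    exact fun n => restrictSeq_mem_cyl q n

lemma mem_fruit_prefix {X : Type*} {V : List ℕ → Set X} {p : ℕ → ℕ} {x : X}
    (hx : x ∈ fruit V p) (n : ℕ) : x ∈ V (restrictSeq p n) := by
  exact Set.mem_iInter.1 hx n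

lemma fruit_subset_of_mem_cyl {X : Type*} {V : List ℕ → Set X} {p : ℕ → ℕ} {a : List ℕ}
    (hp : p ∈ cyl a) : fruit V p ⊆ V a := by
  intro x hx
  have := mem_fruit_prefix hx a.length
  rwa [show restrictSeq p a.length = a from hp] at this

end Basics
section Scheme
open scoped Classical

variable {X : Type} [TopologicalSpace X] [CompactSpace X] [T2Space X]

/-- cozero shrinking lemma -/
lemma exists_cozero {K G : Set X} (hK : IsCompact K) (hG : IsOpen G) (hKG : K ⊆ G) :
    ∃ C : Set X, IsOpen C ∧ IsSigmaCompact C ∧ K ⊆ C ∧ closure C ⊆ G := by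
  obtain ⟨g, hg0, hg1, hg01⟩ := exists_continuous_zero_one_of_isClosed
    (isClosed_compl_iff.2 hG) hK.isClosed (by
      rw [Set.disjoint_compl_left_iff_subset]; exact hKG)
  refine ⟨g ⁻¹' Set.Ioi (1/2 : ℝ), isOpen_Ioi.preimage g.continuous, ?_, ?_, ?_⟩
  · refine ⟨fun n => g ⁻¹' Set.Ici (1/2 + 1/(n+1) : ℝ), fun n =>
      (IsClosed.preimage g.continuous isClosed_Ici).isCompact, ?_⟩
    ext x
    simp only [Set.mem_iUnion, Set.mem_preimage, Set.mem_Ici, Set.mem_Ioi]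
    constructor
    · rintro ⟨n, hn⟩
      have : (0:ℝ) < 1/(n+1) := by positivity
      linarith
    · intro hx
      obtain ⟨n, hn⟩ := exists_nat_one_div_lt (show (0:ℝ) < g x - 1/2 by linarith)
      exact ⟨n, by linarith⟩
  · intro x hx
    have : g x = 1 := hg1 hx
    simp only [Set.mem_preimage, Set.mem_Ioi, this]
    norm_num
  · have h1 : closure (g ⁻¹' Set.Ioi (1/2 : ℝ)) ⊆ g ⁻¹' Set.Ici (1/2 : ℝ) :=
      closure_minimal (by intro x hx; simp only [Set.mem_preimage, Set.mem_Ioi, Set.mem_Ici] at hx ⊢; linarith) (IsClosed.preimage g.continuous isClosed_Ici)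
    refine h1.trans fun x hx => ?_
    by_contra hxG
    have : g x = 0 := hg0 hxG
    simp only [Set.mem_preimage, Set.mem_Ici, this] at hx
    linarith

/-- A good set: open, nonempty, σ-compact. -/
def Good (G : Set X) : Prop := IsOpen G ∧ G.Nonempty ∧ IsSigmaCompact G

omit [T2Space X] in
lemma good_univ [Nonempty X] : Good (Set.univ : Set X) :=
  ⟨isOpen_univ, Set.univ_nonempty, isSigmaCompact_univ⟩

lemma exists_children (B : ℕ → Set X) (hBne : ∀ j, (B j).Nonempty)
    (hBo : ∀ j, IsOpen (B j)) {G : Set X} (hG : Good G) :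
    ∃ D : ℕ → Set X, (∀ n, Good (D n)) ∧ (∀ n, closure (D n) ⊆ G) ∧
      (∀ x ∈ G, ∃ n, x ∈ D n) ∧ (∀ j, B j ⊆ G → ∃ n, D n ⊆ B j) := by
  classical
  obtain ⟨hGo, ⟨x₀, hx₀⟩, hGsc⟩ := hG
  -- default child
  obtain ⟨C₀, hC₀o, hC₀sc, hC₀mem, hC₀cl⟩ :=
    exists_cozero (isCompact_singleton (x := x₀)) hGo (Set.singleton_subset_iff.2 hx₀)
  have hC₀ne : C₀.Nonempty := ⟨x₀, hC₀mem rfl⟩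
  -- covering children
  obtain ⟨K, hKc, hKU⟩ := hGsc
  have hKG : ∀ j, K j ⊆ G := fun j => hKU ▸ Set.subset_iUnion K j
  choose Cc hCco hCcsc hCcK hCccl using fun j => exists_cozero (hKc j) hGo (hKG j)
  -- π-net children
  have hpt : ∀ j, IsCompact ({(hBne j).some} : Set X) := fun j => isCompact_singleton
  choose Cp hCpo hCpsc hCpmem hCpcl using fun j =>
    exists_cozero (hpt j) (hBo j) (Set.singleton_subset_iff.2 (hBne j).some_mem)
  set Dc : ℕ → Set X := fun j => if (Cc j).Nonempty then Cc j else C₀ with hDc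
  set Dp : ℕ → Set X := fun j => if B j ⊆ G then Cp j else C₀ with hDp
  refine ⟨fun n => if Even n then Dc (n/2) else Dp (n/2), ?_, ?_, ?_, ?_⟩
  · intro n
    dsimp only
    split <;> rename_i h
    · simp only [hDc]; split <;> rename_i h2
      · exact ⟨hCco _, h2, hCcsc _⟩
      · exact ⟨hC₀o, hC₀ne, hC₀sc⟩
    · simp only [hDp]; split <;> rename_i h2
      · exact ⟨hCpo _, ⟨_, hCpmem _ rfl⟩, hCpsc _⟩
      · exact ⟨hC₀o, hC₀ne, hC₀sc⟩
  · intro n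
    dsimp only
    split
    · simp only [hDc]; split
      · exact hCccl _
      · exact hC₀cl
    · simp only [hDp]; split <;> rename_i h2
      · exact (hCpcl _).trans h2
      · exact hC₀cl
  · intro x hx
    rw [← hKU] at hx
    obtain ⟨j, hj⟩ := Set.mem_iUnion.1 hx
    refine ⟨2 * j, ?_⟩
    dsimp only
    have he : Even (2 * j) := even_two_mul j
    have hd : (2 * j) / 2 = j := by omega
    simp only [he, if_true, hd, hDc]
    have : (Cc j).Nonempty := ⟨x, hCcK j hj⟩
    simp only [this, if_true]
    exact hCcK j hj
  · intro j hj
    refine ⟨2 * j + 1, ?_⟩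
    dsimp only
    have he : ¬ Even (2 * j + 1) := by simp [Nat.even_add_one, parity_simps]
    have hd : (2 * j + 1) / 2 = j := by omega
    simp only [he, if_false, hd, hDp, hj, if_true]
    exact (subset_closure.trans (hCpcl j))

end Scheme
section WScheme
set_option linter.unusedSectionVars false
open scoped Classical

variable {X : Type} [TopologicalSpace X] [CompactSpace X] [T2Space X] [Nonempty X]

noncomputable def childF (B : ℕ → Set X) (G : Set X) : ℕ → Set X :=
  if h : (∀ j, (B j).Nonempty) ∧ (∀ j, IsOpen (B j)) ∧ Good G
  then (exists_children B h.1 h.2.1 h.2.2).choose else fun _ => Set.univ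

lemma childF_spec {B : ℕ → Set X} (hBne : ∀ j, (B j).Nonempty) (hBo : ∀ j, IsOpen (B j))
    {G : Set X} (hG : Good G) :
    (∀ n, Good (childF B G n)) ∧ (∀ n, closure (childF B G n) ⊆ G) ∧
      (∀ x ∈ G, ∃ n, x ∈ childF B G n) ∧ (∀ j, B j ⊆ G → ∃ n, childF B G n ⊆ B j) := by
  have h : (∀ j, (B j).Nonempty) ∧ (∀ j, IsOpen (B j)) ∧ Good G := ⟨hBne, hBo, hG⟩
  simp only [childF, dif_pos h]
  exact (exists_children B h.1 h.2.1 h.2.2).choose_spec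

noncomputable def Wrev (B : ℕ → Set X) : List ℕ → Set X
  | [] => Set.univ
  | n :: a => childF B (Wrev B a) (Nat.unpair n).1

noncomputable def W (B : ℕ → Set X) (a : List ℕ) : Set X := Wrev B a.reverse

lemma W_nil (B : ℕ → Set X) : W B [] = Set.univ := rfl

lemma W_concat (B : ℕ → Set X) (a : List ℕ) (n : ℕ) :
    W B (a ++ [n]) = childF B (W B a) (Nat.unpair n).1 := by
  simp [W, Wrev]

variable {B : ℕ → Set X}

lemma good_W (hBne : ∀ j, (B j).Nonempty) (hBo : ∀ j, IsOpen (B j)) (a : List ℕ) :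
    Good (W B a) := by
  suffices h : ∀ l : List ℕ, Good (Wrev B l) from h a.reverse
  intro l
  induction l with
  | nil => exact good_univ
  | cons n a ih => exact (childF_spec hBne hBo ih).1 _

lemma W_closure (hBne : ∀ j, (B j).Nonempty) (hBo : ∀ j, IsOpen (B j)) (a : List ℕ)
    (n : ℕ) : closure (W B (a ++ [n])) ⊆ W B a := by
  rw [W_concat]
  exact (childF_spec hBne hBo (good_W hBne hBo a)).2.1 _

lemma W_mono (hBne : ∀ j, (B j).Nonempty) (hBo : ∀ j, IsOpen (B j)) (a : List ℕ)
    (n : ℕ) : W B (a ++ [n]) ⊆ W B a :=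
  subset_closure.trans (W_closure hBne hBo a n)

lemma W_prefix (hBne : ∀ j, (B j).Nonempty) (hBo : ∀ j, IsOpen (B j)) (c d : List ℕ) :
    W B (c ++ d) ⊆ W B c := by
  induction d using List.reverseRecOn with
  | nil => simp
  | append_singleton d n ih =>
      rw [← List.append_assoc]
      exact (W_mono hBne hBo (c ++ d) n).trans ih

lemma W_cover (hBne : ∀ j, (B j).Nonempty) (hBo : ∀ j, IsOpen (B j)) {a : List ℕ} {x : X}
    (hx : x ∈ W B a) (k : ℕ) :
    ∃ n, (Nat.unpair n).2 = k ∧ x ∈ W B (a ++ [n]) := by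
  obtain ⟨m, hm⟩ := (childF_spec hBne hBo (good_W hBne hBo a)).2.2.1 x hx
  refine ⟨Nat.pair m k, by simp, ?_⟩
  rw [W_concat, Nat.unpair_pair]
  exact hm

lemma W_pinet (hBne : ∀ j, (B j).Nonempty) (hBo : ∀ j, IsOpen (B j)) {a : List ℕ} {j : ℕ}
    (hj : B j ⊆ W B a) : ∃ n, W B (a ++ [n]) ⊆ B j := by
  obtain ⟨m, hm⟩ := (childF_spec hBne hBo (good_W hBne hBo a)).2.2.2 j hj
  refine ⟨Nat.pair m 0, ?_⟩
  rw [W_concat, Nat.unpair_pair]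
  exact hm

lemma fruit_W_nonempty (hBne : ∀ j, (B j).Nonempty) (hBo : ∀ j, IsOpen (B j))
    (p : ℕ → ℕ) : (fruit (W B) p).Nonempty := by
  set t : ℕ → Set X := fun n => closure (W B (restrictSeq p (n + 1))) with ht
  have hsub : ∀ n, t (n + 1) ⊆ t n := by
    intro n
    apply closure_mono
    rw [restrictSeq_succ p (n + 1)]
    exact W_mono hBne hBo _ _
  have hne : ∀ n, (t n).Nonempty :=
    fun n => ((good_W hBne hBo _).2.1).closure
  have hcl : ∀ n, IsClosed (t n) := fun n => isClosed_closure
  have h0 : IsCompact (t 0) := (hcl 0).isCompact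
  have hmain := IsCompact.nonempty_iInter_of_sequence_nonempty_isCompact_isClosed
    t hsub hne h0 hcl
  obtain ⟨x, hx⟩ := hmain
  refine ⟨x, Set.mem_iInter.2 fun n => ?_⟩
  cases n with
  | zero => rw [restrictSeq_zero, W_nil]; trivial
  | succ n =>
      have := Set.mem_iInter.1 hx (n + 1)
      simp only [ht] at this
      rw [restrictSeq_succ p (n + 1)] at this
      exact W_closure hBne hBo _ _ this

def decSeq (p : ℕ → ℕ) (j : ℕ) : ℕ → ℕ := fun i => (Nat.unpair (p (j + 1 + i))).2 - 1

def LastReset (p : ℕ → ℕ) (j : ℕ) : Prop :=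
  (Nat.unpair (p j)).2 = 0 ∧ ∀ i, j < i → (Nat.unpair (p i)).2 ≠ 0

lemma lastReset_unique {p : ℕ → ℕ} {j j' : ℕ} (h : LastReset p j) (h' : LastReset p j') :
    j = j' := by
  rcases lt_trichotomy j j' with hlt | heq | hgt
  · exact absurd h'.1 (h.2 j' hlt)
  · exact heq
  · exact absurd h.1 (h'.2 j hgt)

noncomputable def sel (B : ℕ → Set X) (e : (ℕ → ℕ) → X) (p : ℕ → ℕ) : X :=
  if h : ∃ j, LastReset p j ∧ e (decSeq p j) ∈ fruit (W B) p then e (decSeq p h.choose)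
  else if h' : (fruit (W B) p).Nonempty then h'.some else Classical.arbitrary X

lemma sel_mem_fruit (hBne : ∀ j, (B j).Nonempty) (hBo : ∀ j, IsOpen (B j))
    (e : (ℕ → ℕ) → X) (p : ℕ → ℕ) : sel B e p ∈ fruit (W B) p := by
  unfold sel
  split
  · next h => exact h.choose_spec.2
  · split
    · next h' => exact h'.some_mem
    · next h' => exact absurd (fruit_W_nonempty hBne hBo p) h'

lemma restrictSeq_take (p : ℕ → ℕ) {n m : ℕ} (h : n ≤ m) :
    (restrictSeq p m).take n = restrictSeq p n := by
  apply List.ext_getElem (by simp [restrictSeq_length]; omega)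
  intro i h1 h2
  rw [restrictSeq_getElem p (by simpa [restrictSeq_length] using h2)]
  rw [List.getElem_take]
  rw [restrictSeq_getElem p (by simp [restrictSeq_length] at h1 ⊢; omega)]

lemma sel_surj_cyl (hBne : ∀ j, (B j).Nonempty) (hBo : ∀ j, IsOpen (B j))
    {e : (ℕ → ℕ) → X} (he : Function.Surjective e) {a : List ℕ} {x : X}
    (hx : x ∈ W B a) : ∃ p ∈ cyl a, sel B e p = x := by
  obtain ⟨q, hq⟩ := he x
  set kv : ℕ → ℕ := fun i => if i = 0 then 0 else q (i - 1) + 1 with hkv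
  set pick : List ℕ → ℕ → ℕ := fun b k =>
    if h : x ∈ W B b then (W_cover hBne hBo h k).choose else 0 with hpick
  have pick_spec : ∀ b k, x ∈ W B b →
      (Nat.unpair (pick b k)).2 = k ∧ x ∈ W B (b ++ [pick b k]) := by
    intro b k h
    simp only [hpick, dif_pos h]
    exact (W_cover hBne hBo h k).choose_spec
  set s : ℕ → List ℕ := fun i => Nat.rec a (fun i b => b ++ [pick b (kv i)]) i with hs
  have hs0 : s 0 = a := rfl
  have hssucc : ∀ i, s (i + 1) = s i ++ [pick (s i) (kv i)] := fun i => rfl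
  have hxs : ∀ i, x ∈ W B (s i) := by
    intro i
    induction i with
    | zero => exact hx
    | succ i ih => rw [hssucc]; exact (pick_spec (s i) (kv i) ih).2
  set t : ℕ → ℕ := fun i => pick (s i) (kv i) with htdef
  set p : ℕ → ℕ := fun m => if hm : m < a.length then a[m] else t (m - a.length) with hp
  have hpa : p ∈ cyl a := by
    rw [mem_cyl_iff]
    intro i hi
    simp [hp, hi]
  have hplen : ∀ i, p (a.length + i) = t i := by
    intro i
    simp only [hp]
    rw [dif_neg (by omega)]
    congr 1
    omega
  have hrs : ∀ i, restrictSeq p (a.length + i) = s i := by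
    intro i
    induction i with
    | zero => exact hpa
    | succ i ih =>
        rw [show a.length + (i + 1) = (a.length + i) + 1 by omega, restrictSeq_succ,
          ih, hplen i, hssucc]
  have hfr : x ∈ fruit (W B) p := by
    refine Set.mem_iInter.2 fun n => ?_
    rcases le_or_gt n a.length with h | h
    · have heq : restrictSeq p n = (restrictSeq p a.length).take n := by
        rw [restrictSeq_take p h]
      have ha : restrictSeq p a.length = a := hpa
      rw [heq, ha]
      have : a = a.take n ++ a.drop n := by simp
      have hsub : W B a ⊆ W B (a.take n) := by
        nth_rewrite 1 [this]
        exact W_prefix hBne hBo _ _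
      exact hsub hx
    · obtain ⟨i, rfl⟩ : ∃ i, n = a.length + i := ⟨n - a.length, by omega⟩
      rw [hrs i]
      exact hxs i
  have hLR : LastReset p a.length := by
    constructor
    · have : p a.length = t 0 := by
        have := hplen 0
        simpa using this
      rw [this]
      exact (pick_spec (s 0) (kv 0) (hxs 0)).1
    · intro i hi
      obtain ⟨k, rfl⟩ : ∃ k, i = a.length + (k + 1) := ⟨i - a.length - 1, by omega⟩
      rw [hplen (k + 1)]
      have := (pick_spec (s (k + 1)) (kv (k + 1)) (hxs (k + 1))).1
      simp only [htdef]
      rw [this]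
      simp [hkv]
  have hdec : decSeq p a.length = q := by
    funext i
    simp only [decSeq]
    rw [show a.length + 1 + i = a.length + (1 + i) by omega, hplen (1 + i)]
    have := (pick_spec (s (1 + i)) (kv (1 + i)) (hxs (1 + i))).1
    simp only [htdef]
    rw [this]
    simp [hkv]
  have hEx : ∃ j, LastReset p j ∧ e (decSeq p j) ∈ fruit (W B) p :=
    ⟨a.length, hLR, by rw [hdec, hq]; exact hfr⟩
  refine ⟨p, hpa, ?_⟩
  unfold sel
  rw [dif_pos hEx]
  have : hEx.choose = a.length := lastReset_unique hEx.choose_spec.1 hLR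
  rw [this, hdec, hq]

end WScheme
section Final
set_option linter.unusedSectionVars false
set_option maxHeartbeats 1000000

lemma forward_dir {X : Type} [TopologicalSpace X] (h : IsContinuousOpenImageOfPiSpace X) :
    (∃ γ : Set (Set X), γ.Countable ∧ IsPiBase γ) ∧ Cardinal.mk X ≤ Cardinal.continuum := by
  obtain ⟨Y, tY, f, ⟨V, hOpen, hPart, hStrict, hPiB⟩, hc, ho, hs⟩ := h
  constructor
  · refine ⟨Set.range (fun a : List ℕ => f '' V a), Set.countable_range _, ?_, ?_⟩
    · rintro G ⟨a, rfl⟩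
      refine ⟨ho _ (hOpen a), ?_⟩
      have : (V a).Nonempty := (hPiB.1 (V a) ⟨a, rfl⟩).2
      exact this.image f
    · intro U hU hUne
      have h1 : IsOpen (f ⁻¹' U) := hU.preimage hc
      have h2 : (f ⁻¹' U).Nonempty := by
        obtain ⟨x, hx⟩ := hUne
        obtain ⟨y, rfl⟩ := hs x
        exact ⟨y, hx⟩
      obtain ⟨G, ⟨a, rfl⟩, hGU⟩ := hPiB.2 _ h1 h2
      exact ⟨f '' V a, ⟨a, rfl⟩, Set.image_subset_iff.2 hGU⟩
  · -- cardinality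
    have hmkY : Cardinal.mk Y ≤ Cardinal.mk (ℕ → ℕ) := by
      set g : (ℕ → ℕ) → Y := fun p => (hStrict p).choose with hg
      apply Cardinal.mk_le_of_surjective (f := g)
      intro y
      classical
      have hcov : ∀ b : List ℕ, y ∈ V b → ∃ n, y ∈ V (b ++ [n]) := by
        intro b hb
        have := hPart.1.2 b
        rw [this] at hb
        exact Set.mem_iUnion.1 hb
      set c : List ℕ → ℕ := fun b => if h : y ∈ V b then (hcov b h).choose else 0 with hcdef
      set s : ℕ → List ℕ := fun k => Nat.rec [] (fun _ b => b ++ [c b]) k with hsdef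
      have hs0 : s 0 = [] := rfl
      have hssucc : ∀ k, s (k + 1) = s k ++ [c (s k)] := fun k => rfl
      have hinv : ∀ k, y ∈ V (s k) := by
        intro k
        induction k with
        | zero => rw [hs0, hPart.1.1]; trivial
        | succ k ih =>
            rw [hssucc]
            have hc' : c (s k) = (hcov (s k) ih).choose := by simp [hcdef, dif_pos ih]
            rw [hc']
            exact (hcov (s k) ih).choose_spec
      set p : ℕ → ℕ := fun k => c (s k) with hpdef
      have hrs : ∀ k, restrictSeq p k = s k := by
        intro k
        induction k with
        | zero => rfl
        | succ k ih => rw [restrictSeq_succ, ih, hssucc]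
      have hyfruit : y ∈ fruit V p := Set.mem_iInter.2 fun k => by rw [hrs]; exact hinv k
      refine ⟨p, ?_⟩
      have := (hStrict p).choose_spec
      rw [this] at hyfruit
      exact hyfruit.symm
    have hcont : Cardinal.mk (ℕ → ℕ) = Cardinal.continuum := by
      rw [Cardinal.mk_arrow, Cardinal.mk_nat, Cardinal.lift_aleph0,
        Cardinal.power_self_eq le_rfl, Cardinal.continuum]
    exact (Cardinal.mk_le_of_surjective hs).trans (hmkY.trans hcont.le)

section Backward

variable {X : Type} [TopologicalSpace X] [CompactSpace X] [T2Space X] [Nonempty X]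

lemma sigma_isOpen_cyl (f : (ℕ → ℕ) → X) (a : List ℕ) : IsOpen[sigmaTop f] (cyl a) :=
  TopologicalSpace.GenerateOpen.basic _ (Or.inr ⟨a, rfl⟩)

lemma sigma_isOpen_preimage (f : (ℕ → ℕ) → X) {U : Set X} (hU : IsOpen U) :
    IsOpen[sigmaTop f] (f ⁻¹' U) :=
  TopologicalSpace.GenerateOpen.basic _ (Or.inl ⟨U, hU, rfl⟩)

lemma sigma_basis {f : (ℕ → ℕ) → X} {O : Set (ℕ → ℕ)} (hO : IsOpen[sigmaTop f] O) :
    ∀ p ∈ O, ∃ (U : Set X) (a : List ℕ), IsOpen U ∧ p ∈ f ⁻¹' U ∧ p ∈ cyl a ∧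
      f ⁻¹' U ∩ cyl a ⊆ O := by
  have hO' : TopologicalSpace.GenerateOpen
      ({S : Set (ℕ → ℕ) | ∃ U : Set X, IsOpen U ∧ S = f ⁻¹' U} ∪
        {S : Set (ℕ → ℕ) | ∃ a : List ℕ, S = cyl a}) O := hO
  clear hO
  induction hO' with
  | basic S hS =>
      rcases hS with ⟨U, hU, rfl⟩ | ⟨a, rfl⟩
      · intro p hp
        refine ⟨U, [], hU, hp, by rw [cyl_nil]; trivial, fun q hq => hq.1⟩
      · intro p hp
        refine ⟨Set.univ, a, isOpen_univ, trivial, hp, fun q hq => hq.2⟩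
  | univ =>
      intro p _
      exact ⟨Set.univ, [], isOpen_univ, trivial, by rw [cyl_nil]; trivial, fun q _ => trivial⟩
  | inter O₁ O₂ h1 h2 ih1 ih2 =>
      intro p hp
      obtain ⟨U₁, a₁, hU₁, hpU₁, hpa₁, hsub₁⟩ := ih1 p hp.1
      obtain ⟨U₂, a₂, hU₂, hpU₂, hpa₂, hsub₂⟩ := ih2 p hp.2
      have e₁ : a₁ = restrictSeq p a₁.length := hpa₁.symm
      have e₂ : a₂ = restrictSeq p a₂.length := hpa₂.symm
      set N := max a₁.length a₂.length with hN
      refine ⟨U₁ ∩ U₂, restrictSeq p N, hU₁.inter hU₂, ⟨hpU₁, hpU₂⟩,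
        restrictSeq_mem_cyl p N, ?_⟩
      intro q hq
      have hq₁ : q ∈ cyl a₁ := by
        rw [e₁]; exact cyl_anti (le_max_left _ _) hq.2
      have hq₂ : q ∈ cyl a₂ := by
        rw [e₂]; exact cyl_anti (le_max_right _ _) hq.2
      exact ⟨hsub₁ ⟨hq.1.1, hq₁⟩, hsub₂ ⟨hq.1.2, hq₂⟩⟩
  | sUnion S hS ih =>
      intro p hp
      obtain ⟨s, hsS, hps⟩ := hp
      obtain ⟨U, a, h1, h2, h3, h4⟩ := ih s hsS p hps
      exact ⟨U, a, h1, h2, h3, h4.trans (Set.subset_sUnion_of_mem hsS)⟩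

lemma backward_dir (hpi : ∃ γ : Set (Set X), γ.Countable ∧ IsPiBase γ)
    (hcard : Cardinal.mk X ≤ Cardinal.continuum) : IsContinuousOpenImageOfPiSpace X := by
  classical
  obtain ⟨γ, hγc, hγ⟩ := hpi
  -- enumerate the π-base
  have hγne : γ.Nonempty := by
    obtain ⟨G, hG, _⟩ := hγ.2 Set.univ isOpen_univ Set.univ_nonempty
    exact ⟨G, hG⟩
  obtain ⟨B, hBrange⟩ := hγc.exists_eq_range hγne
  have hBmem : ∀ j, B j ∈ γ := fun j => hBrange ▸ Set.mem_range_self j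
  have hBne : ∀ j, (B j).Nonempty := fun j => (hγ.1 _ (hBmem j)).2
  have hBo : ∀ j, IsOpen (B j) := fun j => (hγ.1 _ (hBmem j)).1
  have hBbase : ∀ U : Set X, IsOpen U → U.Nonempty → ∃ j, B j ⊆ U := by
    intro U hU hUne
    obtain ⟨S, hSγ, hSU⟩ := hγ.2 U hU hUne
    rw [hBrange] at hSγ
    obtain ⟨j, rfl⟩ := hSγ
    exact ⟨j, hSU⟩
  -- the surjection from Baire space
  have hmk : Cardinal.mk X ≤ Cardinal.mk (ℕ → ℕ) := by
    rwa [Cardinal.mk_arrow, Cardinal.mk_nat, Cardinal.lift_aleph0,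
      Cardinal.power_self_eq le_rfl, ← Cardinal.continuum]
  obtain ⟨emb⟩ := (Cardinal.le_def X (ℕ → ℕ)).1 hmk
  set e : (ℕ → ℕ) → X := Function.invFun emb with he
  have hesurj : Function.Surjective e := Function.invFun_surjective emb.injective
  -- the selector and the topology
  set f : (ℕ → ℕ) → X := sel B e with hf
  have hfm : ∀ p, f p ∈ fruit (W B) p := sel_mem_fruit hBne hBo e
  have hfs : ∀ (a : List ℕ) (x : X), x ∈ W B a → ∃ p ∈ cyl a, f p = x :=
    fun a x hx => sel_surj_cyl hBne hBo hesurj hx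
  have himage : ∀ (U : Set X) (a : List ℕ), f '' (f ⁻¹' U ∩ cyl a) = U ∩ W B a := by
    intro U a
    apply Set.Subset.antisymm
    · rintro _ ⟨p, ⟨hpU, hpa⟩, rfl⟩
      exact ⟨hpU, fruit_subset_of_mem_cyl hpa (hfm p)⟩
    · rintro x ⟨hxU, hxW⟩
      obtain ⟨p, hpa, hpx⟩ := hfs a x hxW
      exact ⟨p, ⟨by rw [Set.mem_preimage, hpx]; exact hxU, hpa⟩, hpx⟩
  refine ⟨ℕ → ℕ, sigmaTop f, f, ?_, ?_, ?_, ?_⟩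
  · -- IsPiSpace
    refine ⟨cyl, fun a => sigma_isOpen_cyl f a, ⟨⟨cyl_nil, cyl_eq_iUnion⟩,
      fun a n m h => cyl_disjoint h⟩, fun p => ⟨p, fruit_cyl p⟩, ?_, ?_⟩
    · rintro G ⟨a, rfl⟩
      exact ⟨sigma_isOpen_cyl f a, cyl_nonempty a⟩
    · intro O hO hOne
      obtain ⟨p, hp⟩ := hOne
      obtain ⟨U, a, hU, hpU, hpa, hsub⟩ := sigma_basis hO p hp
      have hUW : (U ∩ W B a).Nonempty :=
        ⟨f p, hpU, fruit_subset_of_mem_cyl hpa (hfm p)⟩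
      have hUWo : IsOpen (U ∩ W B a) := hU.inter (good_W hBne hBo a).1
      obtain ⟨j, hj⟩ := hBbase _ hUWo hUW
      obtain ⟨n, hn⟩ := W_pinet hBne hBo (hj.trans Set.inter_subset_right)
      refine ⟨cyl (a ++ [n]), ⟨a ++ [n], rfl⟩, ?_⟩
      intro r hr
      have hrW : f r ∈ W B (a ++ [n]) := fruit_subset_of_mem_cyl hr (hfm r)
      have hrU : r ∈ f ⁻¹' U := (hn.trans hj).trans Set.inter_subset_left hrW
      exact hsub ⟨hrU, cyl_concat_subset a n hr⟩
  · -- Continuous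
    rw [continuous_def]
    exact fun U hU => sigma_isOpen_preimage f hU
  · -- IsOpenMap
    intro O hO
    rw [isOpen_iff_forall_mem_open]
    rintro x ⟨p, hpO, rfl⟩
    obtain ⟨U, a, hU, hpU, hpa, hsub⟩ := sigma_basis hO p hpO
    refine ⟨U ∩ W B a, ?_, hU.inter (good_W hBne hBo a).1,
      hpU, fruit_subset_of_mem_cyl hpa (hfm p)⟩
    rw [← himage U a]
    exact Set.image_mono hsub
  · -- Surjective
    intro x
    obtain ⟨p, _, hpx⟩ := hfs [] x (by rw [W_nil]; trivial)
    exact ⟨p, hpx⟩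

end Backward
end Final

/-- A nonempty compact Hausdorff space is a continuous open image of a
π-space iff it has a countable π-base and cardinality at most the continuum. -/
theorem statement9 {X : Type} [TopologicalSpace X] [CompactSpace X] [T2Space X]
    [Nonempty X] :
    IsContinuousOpenImageOfPiSpace X ↔
    ((∃ γ : Set (Set X), γ.Countable ∧ IsPiBase γ) ∧
      Cardinal.mk X ≤ Cardinal.continuum) :=
  ⟨forward_dir, fun h => backward_dir h.1 h.2⟩

end PiSpacePaper
end

section
/- Let V = ⟨V_a⟩ be a Souslin scheme that covers flesh(V) and let f be a selector on V. Then f[S_a] = V_a for every finite sequence a of natural numbers. -/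
open Set Topology

namespace PiSpacePaper

lemma restrictSeq_get (p : ℕ → ℕ) (n i : ℕ) (hi : i < n) :
    (restrictSeq p n).getD i 0 = p i := by
  simp [restrictSeq, List.getD_eq_getElem?_getD, hi]

lemma isOpen_cyl (a : List ℕ) : IsOpen (cyl a) := by
  have : cyl a = ⋂ i ∈ Finset.range a.length, {p : ℕ → ℕ | p i = a.getD i 0} := by
    ext p
    simp only [cyl, mem_setOf_eq, mem_iInter, Finset.mem_range]
    constructor
    · intro h i hi
      have := restrictSeq_get p a.length i hi
      rw [h] at this
      exact this.symm
    · intro h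
      apply List.ext_getElem (restrictSeq_length p a.length)
      intro i h1 h2
      have := h i h2
      have h3 := restrictSeq_get p a.length i h2
      simp only [List.getD_eq_getElem?_getD, List.getElem?_eq_getElem h1,
        List.getElem?_eq_getElem h2, Option.getD_some] at h3 this ⊢
      rw [h3, this]
  rw [this]
  apply isOpen_biInter_finset
  intro i _
  show IsOpen ((fun p : ℕ → ℕ => p i) ⁻¹' {a.getD i 0})
  exact (continuous_apply (A := fun _ : ℕ => ℕ) i).isOpen_preimage ({a.getD i 0} : Set ℕ) (isOpen_discrete _)

lemma covers_mono {X : Type} {V : List ℕ → Set X} (hV : Covers V (flesh V))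
    {c d : List ℕ} (h : c <+: d) : V d ⊆ V c := by
  obtain ⟨t, rfl⟩ := h
  induction t using List.reverseRecOn with
  | nil => simp
  | append_singleton t n ih =>
    refine subset_trans ?_ ih
    rw [← List.append_assoc]
    intro x hx
    rw [hV.2 (c ++ t)]
    exact mem_iUnion.mpr ⟨n, hx⟩

/-- If a Souslin scheme V covers flesh(V) and f is a selector on V, then
f[S_a] = V_a for every finite sequence a. -/
theorem statement12 {X : Type} (V : List ℕ → Set X) (hV : Covers V (flesh V))
    (f : (ℕ → ℕ) → X) (hf : IsSelector V f) (a : List ℕ) :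
    f '' cyl a = V a := by
  apply Set.Subset.antisymm
  · rintro _ ⟨p, hp, rfl⟩
    have hfp : f p ∈ flesh V := hf.1 ▸ mem_range_self p
    have hbr : p ∈ branches V (f p) := (hf.2 (f p) hfp).1 rfl
    have : f p ∈ V (restrictSeq p a.length) := mem_iInter.mp hbr a.length
    rwa [hp] at this
  · intro x hxa
    have hxf : x ∈ flesh V := mem_iUnion.mpr ⟨a, hxa⟩
    -- build a branch through a whose fruit contains x
    have hstep : ∀ b : List ℕ, x ∈ V b → ∃ n, x ∈ V (b ++ [n]) := by
      intro b hb
      rw [hV.2 b] at hb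
      exact mem_iUnion.mp hb
    let b : ℕ → {b : List ℕ // x ∈ V b} := fun k =>
      Nat.rec ⟨a, hxa⟩ (fun _ c =>
        ⟨c.1 ++ [Classical.choose (hstep c.1 c.2)],
          Classical.choose_spec (hstep c.1 c.2)⟩) k
    have hblen : ∀ k, (b k).1.length = a.length + k := by
      intro k
      induction k with
      | zero => rfl
      | succ k ih => simp [b, ih]; omega
    have hbpref : ∀ k m, k ≤ m → (b k).1 <+: (b m).1 := by
      intro k m hkm
      induction m with
      | zero => simp_all
      | succ m ih =>
        rcases Nat.lt_or_ge k (m+1) with h | h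
        · exact (ih (Nat.lt_succ_iff.mp h)).trans ⟨_, rfl⟩
        · have : k = m + 1 := le_antisymm hkm h
          subst this; exact List.prefix_rfl
    let q : ℕ → ℕ := fun i => (b (i + 1)).1.getD i 0
    have hq : ∀ n, restrictSeq q n = (b n).1.take n := by
      intro n
      refine List.ext_getElem ?_ ?_
      · simp [restrictSeq_length, hblen n]
      intro i h1 h2
      have hin : i < n := by simpa [restrictSeq_length] using h1
      have hpref : (b (i+1)).1 <+: (b n).1 := hbpref _ _ hin
      have hilen : i < (b (i+1)).1.length := by have := hblen (i+1); omega
      have hgq : (restrictSeq q n).getD i 0 = q i := restrictSeq_get q n i hin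
      simp only [List.getD_eq_getElem?_getD, List.getElem?_eq_getElem h1] at hgq
      simp only [Option.getD_some] at hgq
      rw [hgq]
      have : ((b n).1.take n)[i] = (b n).1[i]'(by
        have := hblen n; omega) := List.getElem_take
      rw [this]
      have hpe := hpref.getElem hilen
      show (b (i+1)).1.getD i 0 = (b n).1[i]'(by have := hblen n; omega)
      rw [List.getD_eq_getElem _ _ hilen]
      exact hpe
    have hqbr : q ∈ branches V x := by
      refine mem_iInter.mpr fun n => ?_
      rw [hq n]
      exact covers_mono hV (List.take_prefix n (b n).1) (b n).2
    have hqcyl : q ∈ cyl a := by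
      show restrictSeq q a.length = a
      rw [hq a.length]
      have hpref : (b 0).1 <+: (b a.length).1 := hbpref 0 a.length (Nat.zero_le _)
      obtain ⟨t, ht⟩ := hpref
      rw [← ht]
      simp [b]
    have hcl : q ∈ closure (f ⁻¹' {x}) := (hf.2 x hxf).2 hqbr
    obtain ⟨p, hpcyl, hpx⟩ := mem_closure_iff.mp hcl (cyl a) (isOpen_cyl a) hqcyl
    exact ⟨p, hpcyl, hpx⟩
end PiSpacePaper
end
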